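/- Let N, m ∈ ℕ with m < N and let w = (w_i)_{i=1}^N be a vector of positive weights with nonincreasing rearrangement w_{(1)} ≥ w_{(2)} ≥ … ≥ w_{(N)}. Then the Kolmogorov m-width of the weighted ℓ^2 ball B^2_N(w) in ℓ^1_N satisfies d_m(B^2_N(w), ℓ^1_N) = min_{T ⊆ [N], |T| = N−m} ( ∑_{i∈T} w_i^2 )^{1/2} = ( ∑_{j=m+1}^{N} w_{(j)}^2 )^{1/2}. -/

import Mathlib

open Finset
open scoped ENNReal

noncomputable section

/-- The weighted `ℓ^p` (quasi-)norm on `ℝ^N` with positive weights `w` and exponent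
`p ∈ (0,∞]`: `‖x‖_{p,w} = (∑ i, (|x i| / w i)^p)^(1/p)` for `p < ∞`, and
`sup_i |x i| / w i` for `p = ∞`. -/
def wnorm {N : ℕ} (p : ℝ≥0∞) (w : Fin N → ℝ) (x : Fin N → ℝ) : ℝ :=
  if p = ⊤ then ⨆ i, |x i| / w i
  else (∑ i, (|x i| / w i) ^ p.toReal) ^ (1 / p.toReal)

/-- The weighted `ℓ^p` unit ball `B^p_N(w)` in `ℝ^N`. -/
def wball {N : ℕ} (p : ℝ≥0∞) (w : Fin N → ℝ) : Set (Fin N → ℝ) :=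
  {x | wnorm p w x ≤ 1}

/-- The Kolmogorov `m`-width of a subset `K` of `ℝ^N` equipped with the norm `nrm`. -/
def kolWidth {N : ℕ} (m : ℕ) (K : Set (Fin N → ℝ)) (nrm : (Fin N → ℝ) → ℝ) : ℝ :=
  sInf { r | ∃ X : Submodule ℝ (Fin N → ℝ), Module.finrank ℝ X ≤ m ∧
    r = ⨆ x : K, ⨅ z : X, nrm ((x : Fin N → ℝ) - (z : Fin N → ℝ)) }

/-! ### Auxiliary lemmas -/

lemma wnorm_one {N : ℕ} (x : Fin N → ℝ) : wnorm 1 (fun _ => 1) x = ∑ i, |x i| := by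
  simp [wnorm]

lemma wnorm_two {N : ℕ} (w x : Fin N → ℝ) :
    wnorm 2 w x = Real.sqrt (∑ i, (x i / w i) ^ 2) := by
  have h2 : ((2:ℝ≥0∞)).toReal = (2:ℝ) := by simp
  rw [wnorm, if_neg (by norm_num), h2, ← Real.sqrt_eq_rpow]
  congr 1
  apply Finset.sum_congr rfl
  intro i _
  have h : (|x i| / w i) ^ (2:ℝ) = (|x i| / w i) ^ (2:ℕ) := by
    rw [← Real.rpow_natCast]; norm_num
  rw [h, div_pow, div_pow, sq_abs]

lemma mem_wball_two {N : ℕ} (w x : Fin N → ℝ) :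
    x ∈ wball 2 w ↔ ∑ i, (x i / w i) ^ 2 ≤ 1 := by
  rw [wball, Set.mem_setOf_eq, wnorm_two,
    show (1:ℝ) = Real.sqrt 1 by simp, Real.sqrt_le_sqrt_iff (by positivity), Real.sqrt_one]

lemma abs_le_of_mem_wball {N : ℕ} {w : Fin N → ℝ} (hw : ∀ i, 0 < w i) {x : Fin N → ℝ}
    (hx : x ∈ wball 2 w) (i : Fin N) : |x i| ≤ w i := by
  rw [mem_wball_two] at hx
  have h1 : (x i / w i) ^ 2 ≤ 1 := by
    refine le_trans ?_ hx
    exact Finset.single_le_sum (f := fun j => (x j / w j)^2) (fun j _ => sq_nonneg _) (mem_univ i)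
  have h2 : |x i / w i| ≤ 1 := (sq_le_one_iff_abs_le_one _).1 h1
  rw [abs_div, abs_of_pos (hw i), div_le_one (hw i)] at h2
  exact h2

lemma zero_mem_wball {N : ℕ} (w : Fin N → ℝ) : (0 : Fin N → ℝ) ∈ wball 2 w := by
  rw [mem_wball_two]; simp

lemma bddBelow_infRange {N : ℕ} (X : Submodule ℝ (Fin N → ℝ)) (x : Fin N → ℝ) :
    BddBelow (Set.range fun z : X => wnorm 1 (fun _ => 1) (x - (z : Fin N → ℝ))) := by
  refine ⟨0, ?_⟩
  rintro r ⟨z, rfl⟩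
  dsimp only
  rw [wnorm_one]
  positivity

lemma bddAbove_supRange {N : ℕ} {w : Fin N → ℝ} (hw : ∀ i, 0 < w i)
    (X : Submodule ℝ (Fin N → ℝ)) :
    BddAbove (Set.range fun x : (wball 2 w) =>
      ⨅ z : X, wnorm 1 (fun _ => 1) ((x : Fin N → ℝ) - (z : Fin N → ℝ))) := by
  refine ⟨∑ i, w i, ?_⟩
  rintro r ⟨x, rfl⟩
  have h0 : (⨅ z : X, wnorm 1 (fun _ => 1) ((x : Fin N → ℝ) - (z : Fin N → ℝ)))
      ≤ wnorm 1 (fun _ => 1) ((x : Fin N → ℝ) - ((0 : X) : Fin N → ℝ)) :=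
    ciInf_le (bddBelow_infRange X _) 0
  refine le_trans h0 ?_
  rw [Submodule.coe_zero, sub_zero, wnorm_one]
  exact Finset.sum_le_sum fun i _ => abs_le_of_mem_wball hw x.2 i

/-! ### The sign-vector lemma -/

lemma step_lemma {N : ℕ} (V : Submodule ℝ (Fin N → ℝ)) (y : Fin N → ℝ)
    (hyV : y ∈ V) (hy : ∀ i, |y i| ≤ 1)
    (hcard : (univ.filter fun i => |y i| = 1).card < Module.finrank ℝ V) :
    ∃ y', y' ∈ V ∧ (∀ i, |y' i| ≤ 1) ∧
      (univ.filter fun i => |y i| = 1) ⊂ (univ.filter fun i => |y' i| = 1) := by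
  set S := univ.filter fun i => |y i| = 1 with hSdef
  have hz : ∃ z ∈ V, z ≠ 0 ∧ ∀ i ∈ S, z i = 0 := by
    by_contra hcon
    push_neg at hcon
    let φ : V →ₗ[ℝ] ({i // i ∈ S} → ℝ) :=
      { toFun := fun v => fun i => (v : Fin N → ℝ) i.1
        map_add' := fun a b => rfl
        map_smul' := fun c a => rfl }
    have hinj : Function.Injective φ := by
      rw [← LinearMap.ker_eq_bot, LinearMap.ker_eq_bot']
      intro v hv
      by_contra hv0
      have hvne : (v : Fin N → ℝ) ≠ 0 := by
        intro h0
        exact hv0 (Subtype.ext h0)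
      obtain ⟨i, hiS, hine⟩ := hcon (v : Fin N → ℝ) v.2 hvne
      exact hine (congrFun hv ⟨i, hiS⟩)
    have hle := LinearMap.finrank_le_finrank_of_injective hinj
    have : Module.finrank ℝ ({i // i ∈ S} → ℝ) = S.card := by
      rw [Module.finrank_pi, Fintype.card_coe]
    omega
  obtain ⟨z, hzV, hzne, hzS⟩ := hz
  set supp := univ.filter fun i => z i ≠ 0 with hsupp
  have hne : supp.Nonempty := by
    obtain ⟨i, hi⟩ := Function.ne_iff.1 hzne
    have : z i ≠ 0 := by simpa using hi
    exact ⟨i, by simp [hsupp, this]⟩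
  set t : Fin N → ℝ := fun i => if 0 < z i then (1 - y i) / z i else (-1 - y i) / z i with ht
  have hynotone : ∀ i ∈ supp, |y i| < 1 := by
    intro i hi
    have hzi : z i ≠ 0 := by simpa [hsupp] using hi
    have hiS : i ∉ S := fun h => hzi (hzS i h)
    have : |y i| ≠ 1 := by simpa [hSdef] using hiS
    exact lt_of_le_of_ne (hy i) this
  have htpos : ∀ i ∈ supp, 0 < t i := by
    intro i hi
    have hzi : z i ≠ 0 := by simpa [hsupp] using hi
    have hyi := abs_lt.1 (hynotone i hi)
    by_cases hz0 : 0 < z i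
    · simp only [ht, if_pos hz0]
      exact div_pos (by linarith) hz0
    · have hzn : z i < 0 := lt_of_le_of_ne (not_lt.1 hz0) hzi
      simp only [ht, if_neg hz0]
      exact div_pos_of_neg_of_neg (by linarith) hzn
  set t0 := supp.inf' hne t with ht0
  obtain ⟨i0, hi0mem, hi0⟩ := Finset.exists_mem_eq_inf' hne t
  have ht0pos : 0 < t0 := (Finset.lt_inf'_iff hne).2 htpos
  have hkey : ∀ i ∈ supp, y i + t i * z i = 1 ∨ y i + t i * z i = -1 := by
    intro i hi
    have hzi : z i ≠ 0 := by simpa [hsupp] using hi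
    by_cases hz0 : 0 < z i
    · left; simp only [ht, if_pos hz0]; field_simp; ring
    · right; simp only [ht, if_neg hz0]; field_simp; ring
  refine ⟨y + t0 • z, V.add_mem hyV (V.smul_mem t0 hzV), ?_, ?_⟩
  · intro i
    by_cases hzi : z i = 0
    · simp [hzi, hy i]
    · have hi : i ∈ supp := by simp [hsupp, hzi]
      have hti : t0 ≤ t i := Finset.inf'_le t hi
      have h1 : |y i + t i * z i| ≤ 1 := by
        rcases hkey i hi with h | h <;> rw [h] <;> simp
      have hyi := abs_le.1 (hy i)
      have h1' := abs_le.1 h1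
      simp only [Pi.add_apply, Pi.smul_apply, smul_eq_mul]
      rw [abs_le]
      constructor
      · nlinarith [mul_nonneg (sub_nonneg.2 hti) (by linarith [hyi.1] : (0:ℝ) ≤ y i + 1),
          mul_nonneg (le_of_lt ht0pos) (by linarith [h1'.1] : (0:ℝ) ≤ y i + t i * z i + 1),
          htpos i hi]
      · nlinarith [mul_nonneg (sub_nonneg.2 hti) (by linarith [hyi.2] : (0:ℝ) ≤ 1 - y i),
          mul_nonneg (le_of_lt ht0pos) (by linarith [h1'.2] : (0:ℝ) ≤ 1 - (y i + t i * z i)),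
          htpos i hi]
  · rw [Finset.ssubset_iff_of_subset]
    · refine ⟨i0, ?_, ?_⟩
      · have : |y i0 + t0 * z i0| = 1 := by
          rw [ht0, hi0]
          rcases hkey i0 hi0mem with h | h <;> rw [h] <;> simp
        simp only [mem_filter, mem_univ, true_and]
        simpa using this
      · have hzi0 : z i0 ≠ 0 := by simpa [hsupp] using hi0mem
        have hiS : i0 ∉ S := fun h => hzi0 (hzS i0 h)
        simpa [hSdef] using hiS
    · intro i hi
      have hiS : |y i| = 1 := by simpa [hSdef] using hi
      have hzi : z i = 0 := hzS i hi
      simp only [mem_filter, mem_univ, true_and, Pi.add_apply, Pi.smul_apply, smul_eq_mul,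
        hzi, mul_zero, add_zero]
      exact hiS

lemma exists_sign_vector {N : ℕ} (V : Submodule ℝ (Fin N → ℝ)) :
    ∃ y, y ∈ V ∧ (∀ i, |y i| ≤ 1) ∧
      Module.finrank ℝ V ≤ (univ.filter fun i => |y i| = 1).card := by
  suffices h : ∀ k (y : Fin N → ℝ), y ∈ V → (∀ i, |y i| ≤ 1) →
      N - (univ.filter fun i => |y i| = 1).card ≤ k →
      ∃ y', y' ∈ V ∧ (∀ i, |y' i| ≤ 1) ∧
        Module.finrank ℝ V ≤ (univ.filter fun i => |y' i| = 1).card by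
    exact h N 0 V.zero_mem (by simp) (by omega)
  intro k
  induction k with
  | zero =>
    intro y hyV hy hk
    have hcard : (univ.filter fun i => |y i| = 1).card ≤ N := by
      simpa using Finset.card_filter_le univ fun i => |y i| = 1
    have hfr : Module.finrank ℝ V ≤ N := by
      have := Submodule.finrank_le V
      rwa [Module.finrank_fin_fun] at this
    exact ⟨y, hyV, hy, by omega⟩
  | succ k ih =>
    intro y hyV hy hk
    by_cases h : Module.finrank ℝ V ≤ (univ.filter fun i => |y i| = 1).card
    · exact ⟨y, hyV, hy, h⟩
    · obtain ⟨y', hy'V, hy', hss⟩ := step_lemma V y hyV hy (by omega)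
      have hlt := Finset.card_lt_card hss
      have hcard : (univ.filter fun i => |y' i| = 1).card ≤ N := by
        simpa using Finset.card_filter_le univ fun i => |y' i| = 1
      exact ih y' hy'V hy' (by omega)

/-! ### Orthogonal complement -/

lemma exists_perp {N m : ℕ} (X : Submodule ℝ (Fin N → ℝ)) (hX : Module.finrank ℝ X ≤ m) :
    ∃ V : Submodule ℝ (Fin N → ℝ), N - m ≤ Module.finrank ℝ V ∧
      ∀ y ∈ V, ∀ x ∈ X, ∑ i, x i * y i = 0 := by
  let e : EuclideanSpace ℝ (Fin N) ≃ₗ[ℝ] (Fin N → ℝ) := WithLp.linearEquiv 2 ℝ (Fin N → ℝ)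
  let X' : Submodule ℝ (EuclideanSpace ℝ (Fin N)) := X.map e.symm.toLinearMap
  refine ⟨(X'ᗮ).map e.toLinearMap, ?_, ?_⟩
  · have h1 : Module.finrank ℝ ((X'ᗮ).map e.toLinearMap) = Module.finrank ℝ X'ᗮ :=
      LinearEquiv.finrank_map_eq e X'ᗮ
    have h2 : Module.finrank ℝ X' + Module.finrank ℝ X'ᗮ
        = Module.finrank ℝ (EuclideanSpace ℝ (Fin N)) :=
      Submodule.finrank_add_finrank_orthogonal X'
    have h3 : Module.finrank ℝ (EuclideanSpace ℝ (Fin N)) = N := by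
      simp [finrank_euclideanSpace]
    have h4 : Module.finrank ℝ X' = Module.finrank ℝ X :=
      LinearEquiv.finrank_map_eq e.symm X
    omega
  · rintro y hy x hx
    obtain ⟨y0, hy0, rfl⟩ := Submodule.mem_map.1 hy
    have hx' : e.symm x ∈ X' := Submodule.mem_map_of_mem hx
    have := (Submodule.mem_orthogonal X' y0).1 hy0 (e.symm x) hx'
    rw [← this]
    rw [PiLp.inner_apply]
    apply Finset.sum_congr rfl
    intro i _
    simp [e, RCLike.inner_apply, mul_comm]

/-! ### Rearrangement lemma -/

lemma sum_min {N m : ℕ} (hm : m < N) (g : Fin N → ℝ) (hmono : ∀ i j : Fin N, i ≤ j → g j ≤ g i)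
    (hg : ∀ i, 0 ≤ g i) (S : Finset (Fin N)) (hS : N - m ≤ S.card) :
    ∑ j ∈ univ.filter (fun j : Fin N => m ≤ (j : ℕ)), g j ≤ ∑ j ∈ S, g j := by
  set A := univ.filter (fun j : Fin N => m ≤ (j : ℕ)) with hA
  have hAcard : A.card = N - m := by
    have : A = Finset.Ici (⟨m, hm⟩ : Fin N) := by
      ext j
      simp [hA, Fin.le_def]
    rw [this, Fin.card_Ici]
  set b : Fin N := ⟨m, hm⟩ with hb
  have hAupper : ∀ a ∈ A \ S, g a ≤ g b := by
    intro a ha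
    have : m ≤ (a : ℕ) := by
      have := (Finset.mem_sdiff.1 ha).1
      simpa [hA] using this
    exact hmono b a (by simpa [Fin.le_def, hb] using this)
  have hSlower : ∀ a ∈ S \ A, g b ≤ g a := by
    intro a ha
    have : ¬ m ≤ (a : ℕ) := by
      have := (Finset.mem_sdiff.1 ha).2
      simpa [hA] using this
    exact hmono a b (by simp [Fin.le_def, hb]; omega)
  have hcards : (A \ S).card ≤ (S \ A).card := by
    have h1 := Finset.card_sdiff_add_card_inter A S
    have h2 := Finset.card_sdiff_add_card_inter S A
    have h3 : (A ∩ S).card = (S ∩ A).card := by rw [Finset.inter_comm]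
    omega
  have key : ∑ a ∈ A \ S, g a ≤ ∑ a ∈ S \ A, g a := by
    calc ∑ a ∈ A \ S, g a ≤ ∑ _a ∈ A \ S, g b := Finset.sum_le_sum hAupper
    _ = (A \ S).card * g b := by rw [Finset.sum_const, nsmul_eq_mul]
    _ ≤ (S \ A).card * g b := by
        apply mul_le_mul_of_nonneg_right _ (hg b)
        exact_mod_cast hcards
    _ = ∑ _a ∈ S \ A, g b := by rw [Finset.sum_const, nsmul_eq_mul]
    _ ≤ ∑ a ∈ S \ A, g a := Finset.sum_le_sum hSlower
  have hA' := Finset.sum_inter_add_sum_sdiff A S g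
  have hS' := Finset.sum_inter_add_sum_sdiff S A g
  have h3 : ∑ a ∈ A ∩ S, g a = ∑ a ∈ S ∩ A, g a := by rw [Finset.inter_comm]
  linarith

lemma sum_filter_le_sum_sq {N m : ℕ} (hm : m < N) (w : Fin N → ℝ) (hw : ∀ i, 0 < w i)
    (σ : Equiv.Perm (Fin N)) (hσ : ∀ i j : Fin N, i ≤ j → w (σ j) ≤ w (σ i))
    (T : Finset (Fin N)) (hT : N - m ≤ T.card) :
    ∑ j ∈ univ.filter (fun j : Fin N => m ≤ (j : ℕ)), w (σ j) ^ 2 ≤ ∑ i ∈ T, w i ^ 2 := by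
  have h := sum_min hm (fun j => w (σ j) ^ 2)
    (fun i j hij => pow_le_pow_left₀ (hw _).le (hσ i j hij) 2)
    (fun i => sq_nonneg _) (T.image σ.symm)
    (by rwa [Finset.card_image_of_injective _ σ.symm.injective])
  rw [Finset.sum_image (fun a _ b _ hab => σ.symm.injective hab)] at h
  simpa using h

lemma card_filter_ge {N m : ℕ} (hm : m < N) :
    (univ.filter (fun j : Fin N => m ≤ (j : ℕ))).card = N - m := by
  have : univ.filter (fun j : Fin N => m ≤ (j : ℕ)) = Finset.Ici (⟨m, hm⟩ : Fin N) := by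
    ext j
    simp [Fin.le_def]
  rw [this, Fin.card_Ici]

/-! ### Lower bound -/

lemma lower_bound {N m : ℕ} (hm : m < N) (w : Fin N → ℝ) (hw : ∀ i, 0 < w i)
    (σ : Equiv.Perm (Fin N)) (hσ : ∀ i j : Fin N, i ≤ j → w (σ j) ≤ w (σ i))
    (X : Submodule ℝ (Fin N → ℝ)) (hX : Module.finrank ℝ X ≤ m) :
    (∑ j ∈ univ.filter (fun j : Fin N => m ≤ (j : ℕ)), w (σ j) ^ 2) ^ (1/2 : ℝ)
      ≤ ⨆ x : (wball 2 w), ⨅ z : X,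
          wnorm 1 (fun _ => 1) ((x : Fin N → ℝ) - (z : Fin N → ℝ)) := by
  obtain ⟨V, hVrank, hVperp⟩ := exists_perp X hX
  obtain ⟨y, hyV, hy, hycard⟩ := exists_sign_vector V
  set S := univ.filter fun i => |y i| = 1 with hSdef
  have hScard : N - m ≤ S.card := le_trans hVrank hycard
  set Q := ∑ i, w i ^ 2 * y i ^ 2 with hQ
  have hQ1 : ∑ i ∈ S, w i ^ 2 ≤ Q := by
    calc ∑ i ∈ S, w i ^ 2 = ∑ i ∈ S, w i ^ 2 * y i ^ 2 := by
          apply Finset.sum_congr rfl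
          intro i hi
          have h1 : |y i| = 1 := by simpa [hSdef] using hi
          have h2 : y i ^ 2 = 1 := by rw [← sq_abs, h1]; norm_num
          rw [h2, mul_one]
    _ ≤ Q := Finset.sum_le_sum_of_subset_of_nonneg (Finset.subset_univ S)
          (fun i _ _ => by positivity)
  have hQ0 : ∑ j ∈ univ.filter (fun j : Fin N => m ≤ (j : ℕ)), w (σ j) ^ 2
      ≤ ∑ i ∈ S, w i ^ 2 := sum_filter_le_sum_sq hm w hw σ hσ S hScard
  have hApos : 0 < ∑ j ∈ univ.filter (fun j : Fin N => m ≤ (j : ℕ)), w (σ j) ^ 2 := by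
    apply Finset.sum_pos (fun j _ => by have := hw (σ j); positivity)
    exact ⟨⟨m, hm⟩, by simp⟩
  have hQpos : 0 < Q := lt_of_lt_of_le hApos (le_trans hQ0 hQ1)
  set c := Real.sqrt Q with hc
  have hcpos : 0 < c := Real.sqrt_pos.2 hQpos
  have hc2 : c ^ 2 = Q := Real.sq_sqrt hQpos.le
  set x0 : Fin N → ℝ := fun i => w i ^ 2 * y i / c with hx0
  have hx0mem : x0 ∈ wball 2 w := by
    rw [mem_wball_two]
    have hterm : ∀ i : Fin N, (x0 i / w i) ^ 2 = w i ^ 2 * y i ^ 2 / Q := by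
      intro i
      have hwi := (hw i).ne'
      have h1 : x0 i / w i = w i * y i / c := by
        rw [hx0]
        field_simp
      rw [h1, div_pow, mul_pow, hc2]
    rw [Finset.sum_congr rfl fun i _ => hterm i, ← Finset.sum_div, ← hQ, div_self hQpos.ne']
  have hinner : ∀ z : X, c ≤ wnorm 1 (fun _ => 1) (x0 - (z : Fin N → ℝ)) := by
    intro z
    rw [wnorm_one]
    have h1 : ∑ i, (x0 i - (z : Fin N → ℝ) i) * y i ≤ ∑ i, |x0 i - (z : Fin N → ℝ) i| := by
      apply Finset.sum_le_sum
      intro i _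
      calc (x0 i - (z : Fin N → ℝ) i) * y i ≤ |(x0 i - (z : Fin N → ℝ) i) * y i| :=
            le_abs_self _
      _ = |x0 i - (z : Fin N → ℝ) i| * |y i| := abs_mul _ _
      _ ≤ |x0 i - (z : Fin N → ℝ) i| * 1 :=
            mul_le_mul_of_nonneg_left (hy i) (abs_nonneg _)
      _ = |x0 i - (z : Fin N → ℝ) i| := mul_one _
    refine le_trans (le_of_eq ?_) h1
    have hzy : ∑ i, (z : Fin N → ℝ) i * y i = 0 := hVperp y hyV (z : Fin N → ℝ) z.2
    have h2 : ∑ i, (x0 i - (z : Fin N → ℝ) i) * y i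
        = ∑ i, x0 i * y i - ∑ i, (z : Fin N → ℝ) i * y i := by
      rw [← Finset.sum_sub_distrib]
      apply Finset.sum_congr rfl
      intros
      ring
    rw [h2, hzy, sub_zero]
    have h3 : ∑ i, x0 i * y i = Q / c := by
      rw [hQ, Finset.sum_div]
      apply Finset.sum_congr rfl
      intro i _
      rw [hx0]
      ring
    rw [h3, hc, Real.div_sqrt]
  have hle : (∑ j ∈ univ.filter (fun j : Fin N => m ≤ (j : ℕ)), w (σ j) ^ 2) ^ (1/2 : ℝ) ≤ c := by
    rw [← Real.sqrt_eq_rpow, hc]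
    exact Real.sqrt_le_sqrt (le_trans hQ0 hQ1)
  refine le_trans hle ?_
  have h4 : c ≤ ⨅ z : X, wnorm 1 (fun _ => 1) (x0 - (z : Fin N → ℝ)) :=
    le_ciInf hinner
  exact le_trans h4 (le_ciSup (bddAbove_supRange hw X) (⟨x0, hx0mem⟩ : wball 2 w))

/-! ### Upper bound -/

lemma upper_bound {N m : ℕ} (hm : m < N) (w : Fin N → ℝ) (hw : ∀ i, 0 < w i)
    (σ : Equiv.Perm (Fin N)) :
    ∃ X : Submodule ℝ (Fin N → ℝ), Module.finrank ℝ X ≤ m ∧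
      (⨆ x : (wball 2 w), ⨅ z : X,
          wnorm 1 (fun _ => 1) ((x : Fin N → ℝ) - (z : Fin N → ℝ)))
        ≤ (∑ j ∈ univ.filter (fun j : Fin N => m ≤ (j : ℕ)), w (σ j) ^ 2) ^ (1/2 : ℝ) := by
  set A := univ.filter (fun j : Fin N => m ≤ (j : ℕ)) with hA
  set T : Finset (Fin N) := A.image σ with hT
  have hTcard : T.card = N - m := by
    rw [hT, Finset.card_image_of_injective _ σ.injective, hA, card_filter_ge hm]
  have hsum : ∑ j ∈ A, w (σ j) ^ 2 = ∑ i ∈ T, w i ^ 2 := by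
    rw [hT, Finset.sum_image (fun a _ b _ h => σ.injective h)]
  set π : (Fin N → ℝ) →ₗ[ℝ] ({i // i ∈ T} → ℝ) :=
    { toFun := fun x => fun i => x i.1
      map_add' := fun a b => rfl
      map_smul' := fun c a => rfl } with hπ
  have hsurj : Function.Surjective π := by
    intro u
    refine ⟨fun i => if h : i ∈ T then u ⟨i, h⟩ else 0, ?_⟩
    funext i
    simp [hπ, i.2]
  refine ⟨LinearMap.ker π, ?_, ?_⟩
  · have h1 := LinearMap.finrank_range_add_finrank_ker π
    have h2 : LinearMap.range π = ⊤ := LinearMap.range_eq_top.2 hsurj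
    have h3 : Module.finrank ℝ (LinearMap.range π) = T.card := by
      rw [h2, finrank_top, Module.finrank_pi, Fintype.card_coe]
    rw [Module.finrank_fin_fun, h3, hTcard] at h1
    omega
  · have hne : Nonempty ↑(wball 2 w) := ⟨⟨0, zero_mem_wball w⟩⟩
    apply ciSup_le
    intro x
    set z : Fin N → ℝ := fun i => if i ∈ T then 0 else (x : Fin N → ℝ) i with hz
    have hzmem : z ∈ LinearMap.ker π := by
      rw [LinearMap.mem_ker]
      funext i
      simp [hπ, hz, i.2]
    have hdiff : wnorm 1 (fun _ => 1) ((x : Fin N → ℝ) - z) = ∑ i ∈ T, |(x : Fin N → ℝ) i| := by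
      rw [wnorm_one]
      simp only [Pi.sub_apply]
      rw [show (∑ i, |(x : Fin N → ℝ) i - z i|)
          = ∑ i, if i ∈ T then |(x : Fin N → ℝ) i| else 0 from ?_]
      · rw [Finset.sum_ite_mem, Finset.univ_inter]
      · apply Finset.sum_congr rfl
        intro i _
        by_cases hi : i ∈ T <;> simp [hz, hi]
    have hCS : ∑ i ∈ T, |(x : Fin N → ℝ) i| ≤ (∑ j ∈ A, w (σ j) ^ 2) ^ (1/2 : ℝ) := by
      rw [← Real.sqrt_eq_rpow, hsum]
      rw [Real.le_sqrt (Finset.sum_nonneg fun i _ => abs_nonneg _)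
        (Finset.sum_nonneg fun i _ => by positivity)]
      have hxw : ∀ i : Fin N, |(x : Fin N → ℝ) i| = w i * (|(x : Fin N → ℝ) i| / w i) := by
        intro i
        rw [← mul_div_assoc]
        exact (mul_div_cancel_left₀ _ (hw i).ne').symm
      calc (∑ i ∈ T, |(x : Fin N → ℝ) i|) ^ 2
          = (∑ i ∈ T, w i * (|(x : Fin N → ℝ) i| / w i)) ^ 2 := by
            rw [Finset.sum_congr rfl fun i _ => hxw i]
      _ ≤ (∑ i ∈ T, w i ^ 2) * ∑ i ∈ T, (|(x : Fin N → ℝ) i| / w i) ^ 2 :=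
            Finset.sum_mul_sq_le_sq_mul_sq T _ _
      _ ≤ (∑ i ∈ T, w i ^ 2) * 1 := by
            apply mul_le_mul_of_nonneg_left _ (Finset.sum_nonneg fun i _ => sq_nonneg _)
            have heq : ∀ i : Fin N, (|(x : Fin N → ℝ) i| / w i) ^ 2
                = ((x : Fin N → ℝ) i / w i) ^ 2 := by
              intro i
              rw [div_pow, div_pow, sq_abs]
            rw [Finset.sum_congr rfl fun i _ => heq i]
            refine le_trans (Finset.sum_le_sum_of_subset_of_nonneg (Finset.subset_univ T)
              (fun i _ _ => sq_nonneg _)) ?_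
            exact (mem_wball_two w _).1 x.2
      _ = ∑ i ∈ T, w i ^ 2 := mul_one _
    refine le_trans (ciInf_le (bddBelow_infRange _ _) (⟨z, hzmem⟩ : LinearMap.ker π)) ?_
    rw [hdiff]
    exact hCS

/-! ### Main theorem -/

theorem statement7 {N m : ℕ} (hm : m < N) (w : Fin N → ℝ) (hw : ∀ i, 0 < w i)
    (σ : Equiv.Perm (Fin N)) (hσ : ∀ i j : Fin N, i ≤ j → w (σ j) ≤ w (σ i)) :
    kolWidth m (wball 2 w) (wnorm 1 (fun _ => 1)) =
        sInf { r | ∃ T : Finset (Fin N), T.card = N - m ∧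
          r = (∑ i ∈ T, w i ^ 2) ^ (1/2 : ℝ) } ∧
    kolWidth m (wball 2 w) (wnorm 1 (fun _ => 1)) =
        (∑ j ∈ Finset.univ.filter (fun j : Fin N => m ≤ (j : ℕ)), w (σ j) ^ 2) ^ (1/2 : ℝ) := by
  set c0 : ℝ := (∑ j ∈ Finset.univ.filter (fun j : Fin N => m ≤ (j : ℕ)), w (σ j) ^ 2)
    ^ (1/2 : ℝ) with hc0
  obtain ⟨X0, hX0rank, hX0le⟩ := upper_bound hm w hw σ
  have hX0ge := lower_bound hm w hw σ hσ X0 hX0rank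
  have hX0eq : (⨆ x : (wball 2 w), ⨅ z : X0,
      wnorm 1 (fun _ => 1) ((x : Fin N → ℝ) - (z : Fin N → ℝ))) = c0 :=
    le_antisymm hX0le hX0ge
  have hmemW : c0 ∈ { r | ∃ X : Submodule ℝ (Fin N → ℝ), Module.finrank ℝ X ≤ m ∧
      r = ⨆ x : (wball 2 w), ⨅ z : X,
        wnorm 1 (fun _ => 1) ((x : Fin N → ℝ) - (z : Fin N → ℝ)) } :=
    ⟨X0, hX0rank, hX0eq.symm⟩
  have hlbW : ∀ r ∈ { r | ∃ X : Submodule ℝ (Fin N → ℝ), Module.finrank ℝ X ≤ m ∧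
      r = ⨆ x : (wball 2 w), ⨅ z : X,
        wnorm 1 (fun _ => 1) ((x : Fin N → ℝ) - (z : Fin N → ℝ)) }, c0 ≤ r := by
    rintro r ⟨X, hX, rfl⟩
    exact lower_bound hm w hw σ hσ X hX
  have hkol : kolWidth m (wball 2 w) (wnorm 1 (fun _ => 1)) = c0 := by
    rw [kolWidth]
    exact le_antisymm (csInf_le ⟨c0, hlbW⟩ hmemW) (le_csInf ⟨c0, hmemW⟩ hlbW)
  refine ⟨?_, hkol⟩
  rw [hkol]
  set A := univ.filter (fun j : Fin N => m ≤ (j : ℕ)) with hA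
  set T0 : Finset (Fin N) := A.image σ with hT0
  have hT0card : T0.card = N - m := by
    rw [hT0, Finset.card_image_of_injective _ σ.injective, hA, card_filter_ge hm]
  have hsum : ∑ j ∈ A, w (σ j) ^ 2 = ∑ i ∈ T0, w i ^ 2 := by
    rw [hT0, Finset.sum_image (fun a _ b _ h => σ.injective h)]
  have hmemT : c0 ∈ { r | ∃ T : Finset (Fin N), T.card = N - m ∧
      r = (∑ i ∈ T, w i ^ 2) ^ (1/2 : ℝ) } := ⟨T0, hT0card, by rw [hc0, hsum]⟩
  have hlbT : ∀ r ∈ { r | ∃ T : Finset (Fin N), T.card = N - m ∧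
      r = (∑ i ∈ T, w i ^ 2) ^ (1/2 : ℝ) }, c0 ≤ r := by
    rintro r ⟨T, hTc, rfl⟩
    rw [hc0]
    apply Real.rpow_le_rpow (Finset.sum_nonneg fun j _ => sq_nonneg _)
      (sum_filter_le_sum_sq hm w hw σ hσ T (le_of_eq hTc.symm)) (by norm_num)
  exact le_antisymm (le_csInf ⟨c0, hmemT⟩ hlbT) (csInf_le ⟨c0, hlbT⟩ hmemT)

end
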